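/- Let c ∈ {1,…,K}^n, let W ∈ R^{n×n} satisfy W_{ij} ≥ U > 0 whenever c_i = c_j and W_{ij} ≤ L < U whenever c_i ≠ c_j. Then for any Z with 0 ≤ Z_{ij} ≤ 1 and Σ_{ij} Z_{ij} = Σ_{ij} Z̄_{ij}(c), the inner product gap satisfies ⟨W, Z̄(c)⟩ − ⟨W, Z⟩ ≥ ((U − L)/2) Σ_{ij} |Z̄_{ij}(c) − Z_{ij}|. -/
import Mathlib


theorem stmt_12 (n K : ℕ) (c : Fin n → Fin K)
    (W : Matrix (Fin n) (Fin n) ℝ) (U L : ℝ) (hU : 0 < U) (hLU : L < U)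
    (hWin : ∀ i j, c i = c j → U ≤ W i j)
    (hWout : ∀ i j, c i ≠ c j → W i j ≤ L)
    (Zbar : Matrix (Fin n) (Fin n) ℝ)
    (hZbar : ∀ i j, Zbar i j = if c i = c j then 1 else 0)
    (Z : Matrix (Fin n) (Fin n) ℝ)
    (hZ0 : ∀ i j, 0 ≤ Z i j) (hZ1 : ∀ i j, Z i j ≤ 1)
    (hsum : ∑ i, ∑ j, Z i j = ∑ i, ∑ j, Zbar i j) :
    ((U - L) / 2) * ∑ i, ∑ j, |Zbar i j - Z i j| ≤
      (∑ i, ∑ j, W i j * Zbar i j) - ∑ i, ∑ j, W i j * Z i j := by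
  classical
  set f : Fin n × Fin n → ℝ := fun p => Zbar p.1 p.2 - Z p.1 p.2 with hf
  set s : Finset (Fin n × Fin n) :=
    Finset.univ.filter (fun p => c p.1 = c p.2) with hs
  have hfin : ∀ p ∈ s, 0 ≤ f p := by
    intro p hp
    simp only [hs, Finset.mem_filter] at hp
    simp [hf, hZbar, hp.2]
    exact hZ1 _ _
  have hfout : ∀ p ∈ sᶜ, f p ≤ 0 := by
    intro p hp
    simp only [hs, Finset.mem_compl, Finset.mem_filter, Finset.mem_univ,
      true_and] at hp
    simp [hf, hZbar, hp]
    exact hZ0 _ _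
  have hsum0 : ∑ p : Fin n × Fin n, f p = 0 := by
    have : ∑ p : Fin n × Fin n, f p =
        (∑ i, ∑ j, Zbar i j) - ∑ i, ∑ j, Z i j := by
      rw [← Finset.sum_sub_distrib]
      rw [Fintype.sum_prod_type]
      simp [hf, Finset.sum_sub_distrib]
    rw [this, hsum, sub_self]
  have hsplit : ∀ g : Fin n × Fin n → ℝ,
      ∑ p : Fin n × Fin n, g p = ∑ p ∈ s, g p + ∑ p ∈ sᶜ, g p := by
    intro g
    rw [Finset.sum_add_sum_compl]
  have hA : ∑ p ∈ sᶜ, f p = - ∑ p ∈ s, f p := by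
    have := hsum0
    rw [hsplit f] at this
    linarith
  set A := ∑ p ∈ s, f p with hAdef
  have hA0 : 0 ≤ A := Finset.sum_nonneg hfin
  -- absolute value sum
  have habs : ∑ i, ∑ j, |Zbar i j - Z i j| = 2 * A := by
    have h1 : ∑ i, ∑ j, |Zbar i j - Z i j| = ∑ p : Fin n × Fin n, |f p| := by
      rw [Fintype.sum_prod_type]
    rw [h1, hsplit (fun p => |f p|)]
    have h2 : ∑ p ∈ s, |f p| = A := by
      rw [hAdef]; exact Finset.sum_congr rfl (fun p hp => abs_of_nonneg (hfin p hp))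
    have h3 : ∑ p ∈ sᶜ, |f p| = A := by
      have : ∑ p ∈ sᶜ, |f p| = - ∑ p ∈ sᶜ, f p := by
        rw [← Finset.sum_neg_distrib]
        exact Finset.sum_congr rfl (fun p hp => abs_of_nonpos (hfout p hp))
      rw [this, hA, neg_neg]
    rw [h2, h3]; ring
  have hrhs : (∑ i, ∑ j, W i j * Zbar i j) - ∑ i, ∑ j, W i j * Z i j =
      ∑ p : Fin n × Fin n, W p.1 p.2 * f p := by
    rw [Fintype.sum_prod_type]
    simp [hf, mul_sub, Finset.sum_sub_distrib]
  rw [habs, hrhs, hsplit (fun p => W p.1 p.2 * f p)]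
  have hin : U * A ≤ ∑ p ∈ s, W p.1 p.2 * f p := by
    rw [hAdef, Finset.mul_sum]
    apply Finset.sum_le_sum
    intro p hp
    have hc : c p.1 = c p.2 := by
      simp only [hs, Finset.mem_filter] at hp; exact hp.2
    exact mul_le_mul_of_nonneg_right (hWin _ _ hc) (hfin p hp)
  have hout : L * (-A) ≤ ∑ p ∈ sᶜ, W p.1 p.2 * f p := by
    rw [← hA, Finset.mul_sum]
    apply Finset.sum_le_sum
    intro p hp
    have hc : c p.1 ≠ c p.2 := by
      simp only [hs, Finset.mem_compl, Finset.mem_filter, Finset.mem_univ,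
        true_and] at hp; exact hp
    exact mul_le_mul_of_nonpos_right (hWout _ _ hc) (hfout p hp)
  nlinarith [hin, hout, hA0, hLU]
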